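/- Let m, β, R > 0, μ ∈ ℝ, u(E) := √(2mE)·exp(−β(E−μ)), let l₁,…,l₄ ≥ 0, D diagonal with D_{ii} = 2l_i, and let T : (0,∞) → ℝ^{4×4} be measurable with nonnegative entries satisfying Σ_i T(E)_{ji} = 2l_j and Σ_j T(E)_{ji} = 2l_i for all E > 0. With W(E) := [[1, E−μ],[E−μ,(E−μ)²]], assume E ↦ u(E)(D−T(E))⊗W(E) is entrywise integrable on (0,∞) and set L′ := ∫₀^∞ u(E)(D−T(E))⊗W(E) dE ∈ ℝ^{8×8}, with rows and columns indexed by pairs (i,a), i ∈ {1,…,4}, a ∈ {ρ,q} (Kronecker ordering: a = ρ is the first, a = q the second component). Let M₁₁ ∈ ℝ^{2×2} be the submatrix of L′ with row and column indices, in order, (4,ρ),(3,q); let M₂₂ ∈ ℝ^{4×4} be the submatrix with row and column indices, in order, (4,q),(3,ρ),(1,ρ),(2,q); let M₁₂ (resp. M₂₁) be the 2×4 (resp. 4×2) submatrix with the corresponding row and column index lists. Assume M₂₂ is invertible, and define the Schur complement 𝕃 := M₁₁ − M₁₂ M₂₂⁻¹ M₂₁ ∈ ℝ^{2×2}. Then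 the Hermitian matrix 𝕂 := (𝕃 + 𝕃ᵀ) + i(𝕃 − 𝕃ᵀ) is positive semi-definite on ℂ², i.e. z†𝕂z ≥ 0 for all z ∈ ℂ². -/

import Mathlib

open Matrix Kronecker Complex ComplexOrder MeasureTheory

/-- The weight function `u(E) = √(2mE) · exp(−β(E−μ))`. -/
noncomputable def uWeight (m β μ E : ℝ) : ℝ :=
  Real.sqrt (2 * m * E) * Real.exp (-β * (E - μ))

/-- The diagonal matrix `D` with `D_{ii} = 2 lᵢ`. -/
def Dmat (l : Fin 4 → ℝ) : Matrix (Fin 4) (Fin 4) ℝ :=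
  Matrix.diagonal fun i => 2 * l i

/-- The energy-dependent `2 × 2` weight matrix `W(E) = [[1, E−μ],[E−μ,(E−μ)²]]`. -/
noncomputable def Wmat (μ E : ℝ) : Matrix (Fin 2) (Fin 2) ℝ :=
  !![1, E - μ; E - μ, (E - μ) ^ 2]

/-- The primary Onsager matrix `L′ = ∫₀^∞ u(E) (D − T(E)) ⊗ W(E) dE`, defined
entrywise; rows and columns are indexed by pairs `(i, a)`, `i ∈ Fin 4`,
`a ∈ Fin 2` (`a = 0` is `ρ`, `a = 1` is `q`). -/
noncomputable def Lmat (m β μ : ℝ) (l : Fin 4 → ℝ)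
    (T : ℝ → Matrix (Fin 4) (Fin 4) ℝ) :
    Matrix (Fin 4 × Fin 2) (Fin 4 × Fin 2) ℝ :=
  Matrix.of fun p q => ∫ E in Set.Ioi (0 : ℝ),
    uWeight m β μ E * ((Dmat l - T E) ⊗ₖ Wmat μ E) p q

/-- Row/column index list of the block `M₁₁`: `(4,ρ), (3,q)`. -/
def idx1 : Fin 2 → Fin 4 × Fin 2 := ![(3, 0), (2, 1)]

/-- Row/column index list of the block `M₂₂`: `(4,q), (3,ρ), (1,ρ), (2,q)`. -/
def idx2 : Fin 4 → Fin 4 × Fin 2 := ![(3, 1), (2, 0), (0, 0), (1, 1)]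

/-- The elementary edge functional. -/
noncomputable def phi (a b : ℂ) : ℝ :=
  ((a - b).re ^ 2 + (a - b).im ^ 2) / 2 + (a.re * b.im - a.im * b.re)

lemma phi_self (a : ℂ) : phi a a = 0 := by simp [phi]; ring

lemma phi_pair (a b : ℂ) : 0 ≤ phi a b + phi b a := by
  simp only [phi, Complex.sub_re, Complex.sub_im]
  nlinarith [sq_nonneg (a.re - b.re), sq_nonneg (a.im - b.im)]

lemma phi_tri (a b c : ℂ) : 0 ≤ phi a b + phi b c + phi c a := by
  simp only [phi, Complex.sub_re, Complex.sub_im]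
  nlinarith [sq_nonneg (a.re - b.re/2 + b.im/2 - c.re/2 - c.im/2),
    sq_nonneg (a.im - b.re/2 - b.im/2 + c.re/2 - c.im/2),
    sq_nonneg (b.re - c.re), sq_nonneg (b.im - c.im)]

lemma phi_quad (a b c d : ℂ) : 0 ≤ phi a b + phi b c + phi c d + phi d a := by
  simp only [phi, Complex.sub_re, Complex.sub_im]
  nlinarith [sq_nonneg (a.re - b.re/2 + b.im/2 - d.re/2 - d.im/2),
    sq_nonneg (a.im - b.re/2 - b.im/2 + d.re/2 - d.im/2),
    sq_nonneg (b.re - c.re + c.im - d.im),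
    sq_nonneg (b.im - c.re - c.im + d.re)]

lemma perm_apply_cases (σ : Equiv.Perm (Fin 4)) :
    ⇑σ = ![0,1,2,3] ∨
    ⇑σ = ![0,1,3,2] ∨
    ⇑σ = ![0,2,1,3] ∨
    ⇑σ = ![0,2,3,1] ∨
    ⇑σ = ![0,3,1,2] ∨
    ⇑σ = ![0,3,2,1] ∨
    ⇑σ = ![1,0,2,3] ∨
    ⇑σ = ![1,0,3,2] ∨
    ⇑σ = ![1,2,0,3] ∨
    ⇑σ = ![1,2,3,0] ∨
    ⇑σ = ![1,3,0,2] ∨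
    ⇑σ = ![1,3,2,0] ∨
    ⇑σ = ![2,0,1,3] ∨
    ⇑σ = ![2,0,3,1] ∨
    ⇑σ = ![2,1,0,3] ∨
    ⇑σ = ![2,1,3,0] ∨
    ⇑σ = ![2,3,0,1] ∨
    ⇑σ = ![2,3,1,0] ∨
    ⇑σ = ![3,0,1,2] ∨
    ⇑σ = ![3,0,2,1] ∨
    ⇑σ = ![3,1,0,2] ∨
    ⇑σ = ![3,1,2,0] ∨
    ⇑σ = ![3,2,0,1] ∨
    ⇑σ = ![3,2,1,0] := by
  revert σ; decide

lemma perm_key (σ : Equiv.Perm (Fin 4)) (w : Fin 4 → ℂ) :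
    0 ≤ ∑ i, phi (w i) (w (σ i)) := by
  rcases perm_apply_cases σ with h|h|h|h|h|h|h|h|h|h|h|h|h|h|h|h|h|h|h|h|h|h|h|h <;>
    rw [Fin.sum_univ_four, h] <;>
    simp only [Matrix.cons_val_zero, Matrix.cons_val_one, Matrix.head_cons,
      Matrix.cons_val_two, Matrix.tail_cons, Matrix.cons_val_three] <;>
    linarith [phi_self (w 0), phi_self (w 1), phi_self (w 2), phi_self (w 3), phi_pair (w 0) (w 1), phi_pair (w 0) (w 2), phi_pair (w 0) (w 3), phi_pair (w 1) (w 2), phi_pair (w 1) (w 3), phi_pair (w 2) (w 3), phi_tri (w 0) (w 1) (w 2), phi_tri (w 0) (w 2) (w 1), phi_tri (w 0) (w 1) (w 3), phi_tri (w 0) (w 3) (w 1), phi_tri (w 0) (w 2) (w 3), phi_tri (w 0) (w 3) (w 2), phi_tri (w 1) (w 2) (w 3), phi_tri (w 1) (w 3) (w 2), phi_quad (w 0) (w 1) (w 2) (w 3), phi_quad (w 0) (w 1) (w 3) (w 2), phi_quad (w 0) (w 2) (w 1) (w 3), phi_quad (w 0) (w 2) (w 3) (w 1), phi_quad (w 0)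 (w 3) (w 1) (w 2), phi_quad (w 0) (w 3) (w 2) (w 1)]


/-- Complex sesquilinear form attached to a real matrix. -/
noncomputable def bilinC {P Q : Type*} [Fintype P] [Fintype Q]
    (M : Matrix P Q ℝ) (v : P → ℂ) (u : Q → ℂ) : ℂ :=
  ∑ p, ∑ q, (starRingEnd ℂ) (v p) * ((M p q : ℝ) : ℂ) * u q

variable {P Q R' K K' : Type*} [Fintype P] [Fintype Q] [Fintype R'] [Fintype K] [Fintype K']

lemma bilin_matrix_sub (A B : Matrix P Q ℝ) (v u) :
    bilinC (A - B) v u = bilinC A v u - bilinC B v u := by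
  simp only [bilinC, Matrix.sub_apply, ← Finset.sum_sub_distrib]
  refine Finset.sum_congr rfl fun p _ => Finset.sum_congr rfl fun q _ => ?_
  push_cast; ring

lemma bilin_matrix_add (A B : Matrix P Q ℝ) (v u) :
    bilinC (A + B) v u = bilinC A v u + bilinC B v u := by
  simp only [bilinC, Matrix.add_apply, ← Finset.sum_add_distrib]
  refine Finset.sum_congr rfl fun p _ => Finset.sum_congr rfl fun q _ => ?_
  push_cast; ring

lemma bilin_matrix_zero (v : P → ℂ) (u : Q → ℂ) :
    bilinC (0 : Matrix P Q ℝ) v u = 0 := by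
  simp [bilinC]

lemma bilin_matrix_sum {ι : Type*} [DecidableEq ι] (s : Finset ι) (B : ι → Matrix P Q ℝ) (v u) :
    bilinC (∑ i ∈ s, B i) v u = ∑ i ∈ s, bilinC (B i) v u := by
  induction s using Finset.induction_on with
  | empty => simp [bilin_matrix_zero]
  | insert _ _ h ih => rw [Finset.sum_insert h, Finset.sum_insert h, bilin_matrix_add, ih]

lemma bilin_matrix_smul (r : ℝ) (B : Matrix P Q ℝ) (v u) :
    bilinC (r • B) v u = (r : ℂ) * bilinC B v u := by
  simp only [bilinC, Matrix.smul_apply, smul_eq_mul, Finset.mul_sum]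
  refine Finset.sum_congr rfl fun p _ => Finset.sum_congr rfl fun q _ => ?_
  push_cast; ring

/-- Extension of a vector along an index map, by zero. -/
noncomputable def extV {K P : Type*} [Fintype K] [DecidableEq P] (e : K → P) (v : K → ℂ) :
    P → ℂ := fun p => ∑ k, if p = e k then v k else 0

variable [DecidableEq P] [DecidableEq Q]

lemma bilin_add_left (M : Matrix P Q ℝ) (v v' : P → ℂ) (u : Q → ℂ) :
    bilinC M (v + v') u = bilinC M v u + bilinC M v' u := by
  simp only [bilinC, Pi.add_apply, map_add, ← Finset.sum_add_distrib]
  exact Finset.sum_congr rfl fun p _ => Finset.sum_congr rfl fun q _ => by ring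

lemma bilin_add_right (M : Matrix P Q ℝ) (v : P → ℂ) (u u' : Q → ℂ) :
    bilinC M v (u + u') = bilinC M v u + bilinC M v u' := by
  simp only [bilinC, Pi.add_apply, ← Finset.sum_add_distrib]
  exact Finset.sum_congr rfl fun p _ => Finset.sum_congr rfl fun q _ => by ring

lemma bilin_neg_right (M : Matrix P Q ℝ) (v : P → ℂ) (u : Q → ℂ) :
    bilinC M v (-u) = - bilinC M v u := by
  simp only [bilinC, Pi.neg_apply, ← Finset.sum_neg_distrib]
  exact Finset.sum_congr rfl fun p _ => Finset.sum_congr rfl fun q _ => by ring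

lemma sum_extV_mul (e : K → P) (v : K → ℂ) (f : P → ℂ) :
    ∑ p, extV e v p * f p = ∑ k, v k * f (e k) := by
  simp only [extV, Finset.sum_mul, ite_mul, zero_mul]
  rw [Finset.sum_comm]
  simp

lemma conj_extV (e : K → P) (v : K → ℂ) (p : P) :
    (starRingEnd ℂ) (extV e v p) = extV e (fun k => (starRingEnd ℂ) (v k)) p := by
  simp only [extV, map_sum, apply_ite, map_zero]

lemma bilin_ext (M : Matrix P Q ℝ) (e1 : K → P) (e2 : K' → Q) (v : K → ℂ) (u : K' → ℂ) :
    bilinC M (extV e1 v) (extV e2 u) = bilinC (M.submatrix e1 e2) v u := by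
  have h2 : ∀ p, ∑ q, ((M p q : ℝ) : ℂ) * extV e2 u q
      = ∑ l, ((M p (e2 l) : ℝ) : ℂ) * u l := by
    intro p
    have := sum_extV_mul e2 u (fun q => ((M p q : ℝ) : ℂ))
    calc ∑ q, ((M p q : ℝ) : ℂ) * extV e2 u q
        = ∑ q, extV e2 u q * ((M p q : ℝ) : ℂ) := by
          exact Finset.sum_congr rfl fun q _ => by ring
      _ = ∑ l, u l * ((M p (e2 l) : ℝ) : ℂ) := this
      _ = ∑ l, ((M p (e2 l) : ℝ) : ℂ) * u l := Finset.sum_congr rfl fun l _ => by ring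
  calc bilinC M (extV e1 v) (extV e2 u)
      = ∑ p, extV e1 (fun k => (starRingEnd ℂ) (v k)) p
          * (∑ q, ((M p q : ℝ) : ℂ) * extV e2 u q) := by
        simp only [bilinC, conj_extV]
        exact Finset.sum_congr rfl fun p _ => by
          rw [Finset.mul_sum]
          exact Finset.sum_congr rfl fun q _ => by ring
    _ = ∑ k, (starRingEnd ℂ) (v k) * (∑ q, ((M (e1 k) q : ℝ) : ℂ) * extV e2 u q) :=
        sum_extV_mul e1 _ _
    _ = bilinC (M.submatrix e1 e2) v u := by
        simp only [bilinC, Matrix.submatrix_apply, h2]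
        exact Finset.sum_congr rfl fun k _ => by
          rw [Finset.mul_sum]
          exact Finset.sum_congr rfl fun l _ => by ring

lemma bilin_comp_right (A : Matrix P Q ℝ) (B : Matrix Q R' ℝ) (v : P → ℂ) (u : R' → ℂ) :
    bilinC A v (fun q => ∑ r, ((B q r : ℝ) : ℂ) * u r) = bilinC (A * B) v u := by
  simp only [bilinC, Matrix.mul_apply]
  refine Finset.sum_congr rfl fun p _ => ?_
  calc ∑ q, (starRingEnd ℂ) (v p) * ((A p q : ℝ) : ℂ) * (∑ r, ((B q r : ℝ) : ℂ) * u r)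
      = ∑ q, ∑ r, (starRingEnd ℂ) (v p) * ((A p q : ℝ) : ℂ) * (((B q r : ℝ) : ℂ) * u r) :=
        Finset.sum_congr rfl fun q _ => by rw [Finset.mul_sum]
    _ = ∑ r, ∑ q, (starRingEnd ℂ) (v p) * ((A p q : ℝ) : ℂ) * (((B q r : ℝ) : ℂ) * u r) :=
        Finset.sum_comm
    _ = ∑ r, (starRingEnd ℂ) (v p) * (((∑ q, A p q * B q r : ℝ) : ℝ) : ℂ) * u r := by
        refine Finset.sum_congr rfl fun r _ => ?_
        push_cast
        rw [Finset.mul_sum, Finset.sum_mul]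
        refine Finset.sum_congr rfl fun q _ => by ring


lemma bilin_conj (M : Matrix P Q ℝ) (v : P → ℂ) (u : Q → ℂ) :
    (starRingEnd ℂ) (bilinC M v u) = bilinC Mᵀ u v := by
  simp only [bilinC, map_sum, _root_.map_mul, Complex.conj_ofReal, Matrix.transpose_apply]
  rw [Finset.sum_comm]
  refine Finset.sum_congr rfl fun q _ => Finset.sum_congr rfl fun p _ => ?_
  rw [Complex.conj_conj]
  ring

lemma bilin_comp_left [DecidableEq R'] (A : Matrix P Q ℝ) (B : Matrix P R' ℝ) (v : R' → ℂ) (u : Q → ℂ) :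
    bilinC A (fun p => ∑ r, ((B p r : ℝ) : ℂ) * v r) u = bilinC (Bᵀ * A) v u := by
  have h1 : (starRingEnd ℂ) (bilinC Aᵀ u (fun p => ∑ r, ((B p r : ℝ) : ℂ) * v r))
      = bilinC A (fun p => ∑ r, ((B p r : ℝ) : ℂ) * v r) u := by
    rw [bilin_conj, Matrix.transpose_transpose]
  rw [← h1, bilin_comp_right, ← Matrix.transpose_transpose (Bᵀ * A)]
  rw [show (Bᵀ * A)ᵀ = Aᵀ * B by rw [Matrix.transpose_mul, Matrix.transpose_transpose]]
  rw [← bilin_conj]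

lemma re_mul_bilin (M : Matrix P Q ℝ) (v : P → ℂ) (u : Q → ℂ) :
    ((1 + Complex.I) * bilinC M v u).re
      = ∑ p, ∑ q, ((1 + Complex.I) * ((starRingEnd ℂ) (v p) * u q)).re * M p q := by
  simp only [bilinC, Finset.mul_sum, Complex.re_sum]
  refine Finset.sum_congr rfl fun p _ => Finset.sum_congr rfl fun q _ => ?_
  rw [show (1 + Complex.I) * ((starRingEnd ℂ) (v p) * ((M p q : ℝ) : ℂ) * u q)
      = ((M p q : ℝ) : ℂ) * ((1 + Complex.I) * ((starRingEnd ℂ) (v p) * u q)) by ring]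
  rw [Complex.re_ofReal_mul]
  ring

section Bridge
open Complex

lemma permMatrix_apply (σ : Equiv.Perm (Fin 4)) (p q : Fin 4) :
    (σ.permMatrix ℝ) p q = if σ p = q then 1 else 0 := by
  simp [Equiv.Perm.permMatrix, PEquiv.toMatrix_apply, Equiv.toPEquiv_apply, eq_comm]

lemma phi_decomp (a b : ℂ) :
    phi a b = ((1 + Complex.I) * ((starRingEnd ℂ) a * (a - b))).re
      + (Complex.normSq b - Complex.normSq a) / 2 := by
  simp [phi, Complex.normSq_apply, Complex.mul_re, Complex.mul_im, Complex.add_re,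
    Complex.add_im, Complex.sub_re, Complex.sub_im]
  ring

lemma bilin_one_sub_perm (σ : Equiv.Perm (Fin 4)) (w : Fin 4 → ℂ) :
    bilinC ((1 : Matrix (Fin 4) (Fin 4) ℝ) - σ.permMatrix ℝ) w w
      = ∑ i, (starRingEnd ℂ) (w i) * (w i - w (σ i)) := by
  simp only [bilinC, Matrix.sub_apply, Matrix.one_apply, permMatrix_apply]
  refine Finset.sum_congr rfl fun p _ => ?_
  have : ∀ q : Fin 4, (starRingEnd ℂ) (w p)
        * (((if p = q then (1:ℝ) else 0) - if σ p = q then 1 else 0 : ℝ) : ℂ) * w q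
      = (if p = q then (starRingEnd ℂ) (w p) * w q else 0)
        - (if σ p = q then (starRingEnd ℂ) (w p) * w q else 0) := by
    intro q
    split_ifs <;> push_cast <;> ring
  rw [Finset.sum_congr rfl fun q _ => this q, Finset.sum_sub_distrib,
    Finset.sum_ite_eq Finset.univ p (fun q => (starRingEnd ℂ) (w p) * w q),
    Finset.sum_ite_eq Finset.univ (σ p) (fun q => (starRingEnd ℂ) (w p) * w q)]
  simp [mul_sub]

lemma perm_bilin (σ : Equiv.Perm (Fin 4)) (w : Fin 4 → ℂ) :
    ((1 + Complex.I) * bilinC ((1 : Matrix (Fin 4) (Fin 4) ℝ) - σ.permMatrix ℝ) w w).re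
      = ∑ i, phi (w i) (w (σ i)) := by
  rw [bilin_one_sub_perm, Finset.mul_sum, Complex.re_sum]
  have : ∀ i, phi (w i) (w (σ i))
      = ((1 + Complex.I) * ((starRingEnd ℂ) (w i) * (w i - w (σ i)))).re
        + (Complex.normSq (w (σ i)) - Complex.normSq (w i)) / 2 :=
    fun i => phi_decomp (w i) (w (σ i))
  rw [Finset.sum_congr rfl fun i _ => this i, Finset.sum_add_distrib]
  have h0 : ∑ i, (Complex.normSq (w (σ i)) - Complex.normSq (w i)) / 2 = 0 := by
    have h := Equiv.sum_comp σ (fun i => Complex.normSq (w i) / 2)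
    simp only [sub_div, Finset.sum_sub_distrib, h, sub_self]
  rw [h0, add_zero]

lemma perm_pos (σ : Equiv.Perm (Fin 4)) (w : Fin 4 → ℂ) :
    0 ≤ ((1 + Complex.I) * bilinC ((1 : Matrix (Fin 4) (Fin 4) ℝ) - σ.permMatrix ℝ) w w).re := by
  rw [perm_bilin]; exact perm_key σ w

end Bridge

section Core
open Complex

lemma core_ineq (l : Fin 4 → ℝ) (hl : ∀ i, 0 ≤ l i) (T : Matrix (Fin 4) (Fin 4) ℝ)
    (hTnn : ∀ i j, 0 ≤ T i j) (hrow : ∀ j, ∑ i, T j i = 2 * l j)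
    (hcol : ∀ i, ∑ j, T j i = 2 * l i) (w : Fin 4 → ℂ) :
    0 ≤ ((1 + Complex.I) * bilinC (Dmat l - T) w w).re := by
  set s : ℝ := ∑ i, 2 * l i with hs
  have hs0 : 0 ≤ s := Finset.sum_nonneg fun i _ => by have := hl i; linarith
  have hls : ∀ i, 2 * l i ≤ s := fun i =>
    Finset.single_le_sum (f := fun i => 2 * l i)
      (fun j _ => by show (0:ℝ) ≤ 2 * l j; have := hl j; linarith) (Finset.mem_univ i)
  rcases eq_or_lt_of_le hs0 with hz | hpos
  · -- s = 0 : everything vanishes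
    have hli : ∀ i, l i = 0 := by
      intro i
      have h1 := hls i
      have := hl i
      rw [← hz] at h1
      linarith
    have hT0 : ∀ i j, T i j = 0 := by
      intro i j
      have hsum := hrow i
      rw [hli i, mul_zero] at hsum
      have hle : T i j ≤ ∑ k, T i k := Finset.single_le_sum
        (f := fun k => T i k) (fun k _ => hTnn i k) (Finset.mem_univ j)
      have := hTnn i j
      linarith
    have hzero : Dmat l - T = 0 := by
      ext i j
      simp [Dmat, Matrix.diagonal_apply, hT0, hli, Matrix.sub_apply]
    rw [hzero, bilin_matrix_zero, mul_zero]
    simp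
  · -- s > 0 : Birkhoff decomposition
    set T' : Matrix (Fin 4) (Fin 4) ℝ := T + Matrix.diagonal (fun i => s - 2 * l i) with hT'
    have hDS : s⁻¹ • T' ∈ doublyStochastic ℝ (Fin 4) := by
      rw [mem_doublyStochastic_iff_sum]
      refine ⟨fun i j => ?_, fun i => ?_, fun j => ?_⟩
      · refine mul_nonneg (inv_nonneg.2 hs0) ?_
        by_cases h : i = j
        · subst h
          have := hls i
          simp only [hT', Matrix.add_apply, Matrix.diagonal_apply_eq]
          have := hTnn i i
          linarith
        · simp only [hT', Matrix.add_apply, Matrix.diagonal_apply_ne _ h]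
          have := hTnn i j
          linarith
      · have : ∑ j, T' i j = s := by
          simp only [hT', Matrix.add_apply, Finset.sum_add_distrib]
          rw [hrow i]
          have : ∑ j, Matrix.diagonal (fun k => s - 2 * l k) i j = s - 2 * l i := by
            rw [Finset.sum_eq_single i]
            · simp
            · intro b _ hb
              exact Matrix.diagonal_apply_ne' _ hb
            · simp
          rw [this]; ring
        simp only [Matrix.smul_apply, smul_eq_mul, ← Finset.mul_sum, this]
        field_simp
      · have : ∑ i, T' i j = s := by
          simp only [hT', Matrix.add_apply, Finset.sum_add_distrib]
          rw [hcol j]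
          have : ∑ i, Matrix.diagonal (fun k => s - 2 * l k) i j = s - 2 * l j := by
            rw [Finset.sum_eq_single j]
            · simp
            · intro b _ hb
              exact Matrix.diagonal_apply_ne _ hb
            · simp
          rw [this]; ring
        simp only [Matrix.smul_apply, smul_eq_mul, ← Finset.mul_sum, this]
        field_simp
    obtain ⟨c, hc0, hc1, hcsum⟩ := exists_eq_sum_perm_of_mem_doublyStochastic hDS
    have hdecomp : Dmat l - T = ∑ σ : Equiv.Perm (Fin 4),
        (s * c σ) • ((1 : Matrix (Fin 4) (Fin 4) ℝ) - σ.permMatrix ℝ) := by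
      have h1 : ∑ σ : Equiv.Perm (Fin 4), (s * c σ) • (1 : Matrix (Fin 4) (Fin 4) ℝ)
          = s • (1 : Matrix (Fin 4) (Fin 4) ℝ) := by
        rw [← Finset.sum_smul]
        congr 1
        rw [← Finset.mul_sum, hc1, mul_one]
      have h2 : ∑ σ : Equiv.Perm (Fin 4), (s * c σ) • σ.permMatrix ℝ = T' := by
        have : ∑ σ : Equiv.Perm (Fin 4), (s * c σ) • σ.permMatrix ℝ
            = s • ∑ σ : Equiv.Perm (Fin 4), c σ • σ.permMatrix ℝ := by
          rw [Finset.smul_sum]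
          exact Finset.sum_congr rfl fun σ _ => by rw [smul_smul]
        rw [this, hcsum, smul_smul, mul_inv_cancel₀ (ne_of_gt hpos), one_smul]
      have h3 : Dmat l - T = s • (1 : Matrix (Fin 4) (Fin 4) ℝ) - T' := by
        ext i j
        by_cases h : i = j
        · subst h
          simp [Dmat, hT', Matrix.diagonal_apply_eq, Matrix.one_apply, Matrix.sub_apply,
            Matrix.add_apply, Matrix.smul_apply]
          ring
        · simp [Dmat, hT', Matrix.diagonal_apply_ne _ h, Matrix.one_apply_ne h,
            Matrix.sub_apply, Matrix.add_apply, Matrix.smul_apply]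
      rw [h3, ← h1, ← h2, ← Finset.sum_sub_distrib]
      exact Finset.sum_congr rfl fun σ _ => (smul_sub _ _ _).symm
    rw [hdecomp, bilin_matrix_sum, Finset.mul_sum, Complex.re_sum]
    refine Finset.sum_nonneg fun σ _ => ?_
    rw [bilin_matrix_smul]
    rw [show (1 + Complex.I) * (((s * c σ : ℝ) : ℂ)
        * bilinC ((1 : Matrix (Fin 4) (Fin 4) ℝ) - σ.permMatrix ℝ) w w)
      = ((s * c σ : ℝ) : ℂ) * ((1 + Complex.I)
        * bilinC ((1 : Matrix (Fin 4) (Fin 4) ℝ) - σ.permMatrix ℝ) w w) by ring]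
    rw [Complex.re_ofReal_mul]
    exact mul_nonneg (mul_nonneg hs0 (hc0 σ)) (perm_pos σ w)

end Core

section Kron
open Complex

lemma bilin_kron (A : Matrix (Fin 4) (Fin 4) ℝ) (μ E : ℝ) (x : Fin 4 × Fin 2 → ℂ) :
    bilinC (A ⊗ₖ Wmat μ E) x x
      = bilinC A (fun i => x (i, 0) + ((E - μ : ℝ) : ℂ) * x (i, 1))
          (fun i => x (i, 0) + ((E - μ : ℝ) : ℂ) * x (i, 1)) := by
  simp only [bilinC]
  rw [Fintype.sum_prod_type]
  refine Finset.sum_congr rfl fun i _ => ?_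
  have hin : ∀ a : Fin 2, ∑ q : Fin 4 × Fin 2,
        (starRingEnd ℂ) (x (i, a)) * (((A ⊗ₖ Wmat μ E) (i, a) q : ℝ) : ℂ) * x q
      = ∑ j, ∑ b, (starRingEnd ℂ) (x (i, a))
          * ((A i j * Wmat μ E a b : ℝ) : ℂ) * x (j, b) := by
    intro a
    rw [Fintype.sum_prod_type]
    exact Finset.sum_congr rfl fun j _ => Finset.sum_congr rfl fun b _ => by
      rw [Matrix.kroneckerMap_apply]
  rw [Fin.sum_univ_two, hin 0, hin 1, ← Finset.sum_add_distrib]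
  refine Finset.sum_congr rfl fun j _ => ?_
  rw [Fin.sum_univ_two, Fin.sum_univ_two]
  have h00 : Wmat μ E 0 0 = 1 := rfl
  have h01 : Wmat μ E 0 1 = E - μ := rfl
  have h10 : Wmat μ E 1 0 = E - μ := rfl
  have h11 : Wmat μ E 1 1 = (E - μ) ^ 2 := rfl
  rw [h00, h01, h10, h11, map_add, _root_.map_mul, Complex.conj_ofReal]
  push_cast
  ring

end Kron

/-- The reduced Onsager matrix `𝕃`, obtained from `L′` as the Schur complement
`M₁₁ − M₁₂ M₂₂⁻¹ M₂₁` of the rearranged principal `6 × 6` submatrix with respect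
to its `4 × 4` block `M₂₂`, satisfies: `𝕂 = (𝕃 + 𝕃ᵀ) + i(𝕃 − 𝕃ᵀ)` is positive
semi-definite on `ℂ²`. -/
theorem reduced_onsager_matrix_posSemidef (m β R μ : ℝ)
    (hm : 0 < m) (hβ : 0 < β) (hR : 0 < R)
    (l : Fin 4 → ℝ) (hl : ∀ i, 0 ≤ l i)
    (T : ℝ → Matrix (Fin 4) (Fin 4) ℝ)
    (hTmeas : ∀ i j, Measurable fun E => T E i j)
    (hTnn : ∀ E ∈ Set.Ioi (0 : ℝ), ∀ i j, 0 ≤ T E i j)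
    (hrow : ∀ E ∈ Set.Ioi (0 : ℝ), ∀ j, ∑ i, T E j i = 2 * l j)
    (hcol : ∀ E ∈ Set.Ioi (0 : ℝ), ∀ i, ∑ j, T E j i = 2 * l i)
    (hint : ∀ p q, IntegrableOn
      (fun E => uWeight m β μ E * ((Dmat l - T E) ⊗ₖ Wmat μ E) p q) (Set.Ioi 0))
    (hInv : IsUnit ((Lmat m β μ l T).submatrix idx2 idx2).det)
    (L : Matrix (Fin 2) (Fin 2) ℝ)
    (hL : L = (Lmat m β μ l T).submatrix idx1 idx1
      - (Lmat m β μ l T).submatrix idx1 idx2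
        * ((Lmat m β μ l T).submatrix idx2 idx2)⁻¹
        * (Lmat m β μ l T).submatrix idx2 idx1)
    (z : Fin 2 → ℂ) :
    0 ≤ star z ⬝ᵥ
      (((L + Lᵀ).map Complex.ofReal)
        + Complex.I • ((L - Lᵀ).map Complex.ofReal)) *ᵥ z := by
  classical
  -- Notation for blocks
  set N := Lmat m β μ l T with hN
  set M11 := N.submatrix idx1 idx1 with hM11
  set M12 := N.submatrix idx1 idx2 with hM12
  set M21 := N.submatrix idx2 idx1 with hM21
  set M22 := N.submatrix idx2 idx2 with hM22
  set C : Matrix (Fin 4) (Fin 2) ℝ := M22⁻¹ * M21 with hC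
  set u0 : Fin 4 → ℂ := fun k => ∑ r, ((C k r : ℝ) : ℂ) * z r with hu0
  set y : Fin 4 → ℂ := -u0 with hy
  set x : Fin 4 × Fin 2 → ℂ := extV idx1 z + extV idx2 y with hx
  -- Step 1 : rewrite the goal as the positivity of a real number
  have hgoal : star z ⬝ᵥ (((L + Lᵀ).map Complex.ofReal)
        + Complex.I • ((L - Lᵀ).map Complex.ofReal)) *ᵥ z
      = ((2 * ((1 + Complex.I) * bilinC L z z).re : ℝ) : ℂ) := by
    have h1 : star z ⬝ᵥ (((L + Lᵀ).map Complex.ofReal)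
          + Complex.I • ((L - Lᵀ).map Complex.ofReal)) *ᵥ z
        = (1 + Complex.I) * bilinC L z z + (1 - Complex.I) * bilinC Lᵀ z z := by
      simp only [dotProduct, Matrix.mulVec, Pi.star_apply, bilinC,
        Matrix.add_apply, Matrix.smul_apply, Matrix.map_apply, Matrix.sub_apply,
        Matrix.transpose_apply, smul_eq_mul, Complex.star_def]
      rw [Finset.mul_sum, Finset.mul_sum, ← Finset.sum_add_distrib]
      refine Finset.sum_congr rfl fun p _ => ?_
      rw [Finset.mul_sum, Finset.mul_sum, Finset.mul_sum, ← Finset.sum_add_distrib]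
      refine Finset.sum_congr rfl fun q _ => ?_
      push_cast
      ring
    rw [h1, ← bilin_conj L z z]
    apply Complex.ext <;>
      simp [Complex.add_re, Complex.add_im, Complex.mul_re, Complex.mul_im] <;> ring
  rw [hgoal, Complex.zero_le_real]
  have key : 0 ≤ ((1 + Complex.I) * bilinC L z z).re := by
    -- Step 2 : Schur complement as a quadratic form of the full matrix
    have hMC : M22 * C = M21 := by
      rw [hC, ← Matrix.mul_assoc, Matrix.mul_nonsing_inv _ hInv, Matrix.one_mul]
    have e1 : bilinC N x x
        = bilinC M11 z z + bilinC M12 z y + bilinC M21 y z + bilinC M22 y y := by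
      rw [hx, bilin_add_left, bilin_add_right, bilin_add_right,
        bilin_ext, bilin_ext, bilin_ext, bilin_ext]
      rw [← hM11, ← hM12, ← hM21, ← hM22]
      ring
    have e2 : bilinC M12 z y = - bilinC (M12 * C) z z := by
      rw [hy, bilin_neg_right, hu0, bilin_comp_right]
    have e3 : bilinC M22 y y = - bilinC M21 y z := by
      rw [hy, bilin_neg_right, hu0, bilin_comp_right, hMC]
    have e4 : bilinC L z z = bilinC M11 z z - bilinC (M12 * C) z z := by
      rw [hL, ← bilin_matrix_sub]
      congr 1
      rw [hC, ← Matrix.mul_assoc]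
    have hLb : bilinC L z z = bilinC N x x := by
      rw [e1, e2, e3, e4]; ring
    rw [hLb, re_mul_bilin]
    -- Step 3 : pass the positivity through the integral
    have hNint : ∀ p q, N p q = ∫ E in Set.Ioi (0:ℝ),
        uWeight m β μ E * ((Dmat l - T E) ⊗ₖ Wmat μ E) p q := by
      intro p q; rw [hN]; rfl
    set α : (Fin 4 × Fin 2) → (Fin 4 × Fin 2) → ℝ :=
      fun p q => ((1 + Complex.I) * ((starRingEnd ℂ) (x p) * x q)).re with hα
    have step1 : ∑ p, ∑ q, α p q * N p q
        = ∑ p, ∑ q, ∫ E in Set.Ioi (0:ℝ),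
            α p q * (uWeight m β μ E * ((Dmat l - T E) ⊗ₖ Wmat μ E) p q) := by
      refine Finset.sum_congr rfl fun p _ => Finset.sum_congr rfl fun q _ => ?_
      rw [hNint p q, MeasureTheory.integral_const_mul]
    have step2 : ∑ p, ∑ q, (∫ E in Set.Ioi (0:ℝ),
          α p q * (uWeight m β μ E * ((Dmat l - T E) ⊗ₖ Wmat μ E) p q))
        = ∫ E in Set.Ioi (0:ℝ), ∑ p, ∑ q,
            α p q * (uWeight m β μ E * ((Dmat l - T E) ⊗ₖ Wmat μ E) p q) := by
      have inner : ∀ p, ∑ q, (∫ E in Set.Ioi (0:ℝ),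
            α p q * (uWeight m β μ E * ((Dmat l - T E) ⊗ₖ Wmat μ E) p q))
          = ∫ E in Set.Ioi (0:ℝ), ∑ q,
              α p q * (uWeight m β μ E * ((Dmat l - T E) ⊗ₖ Wmat μ E) p q) := by
        intro p
        rw [← MeasureTheory.integral_finset_sum]
        intro q _
        exact (hint p q).const_mul (α p q)
      rw [Finset.sum_congr rfl fun p _ => inner p, ← MeasureTheory.integral_finset_sum]
      intro p _
      exact MeasureTheory.integrable_finset_sum _ fun q _ => (hint p q).const_mul (α p q)
    rw [step1, step2]
    refine MeasureTheory.setIntegral_nonneg measurableSet_Ioi fun E hE => ?_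
    -- Step 4 : pointwise positivity
    have hu : 0 ≤ uWeight m β μ E :=
      mul_nonneg (Real.sqrt_nonneg _) (Real.exp_pos _).le
    have hpt : ∑ p, ∑ q, α p q * (uWeight m β μ E * ((Dmat l - T E) ⊗ₖ Wmat μ E) p q)
        = uWeight m β μ E
          * ((1 + Complex.I) * bilinC ((Dmat l - T E) ⊗ₖ Wmat μ E) x x).re := by
      rw [re_mul_bilin, Finset.mul_sum]
      refine Finset.sum_congr rfl fun p _ => ?_
      rw [Finset.mul_sum]
      exact Finset.sum_congr rfl fun q _ => by rw [hα]; ring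
    rw [hpt]
    refine mul_nonneg hu ?_
    rw [bilin_kron]
    exact core_ineq l hl (T E) (hTnn E hE) (hrow E hE) (hcol E hE) _
  linarith
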